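/- Suppose the past assortments are the reverse revenue-ordered assortments. Then Ŝ = { S ⊆ N₀ : 0 ∈ S and n ∈ S }. -/
import Mathlib


namespace RobustAssortment

/-- `i` is the most preferred product of the assortment `S` under the ranking `σ`. -/
def isTop {n : ℕ} (σ : Equiv.Perm (Fin (n + 1))) (S : Finset (Fin (n + 1)))
    (i : Fin (n + 1)) : Prop :=
  i ∈ S ∧ ∀ j ∈ S, σ i ≤ σ j

instance {n : ℕ} (σ : Equiv.Perm (Fin (n + 1))) (S : Finset (Fin (n + 1)))
    (i : Fin (n + 1)) : Decidable (isTop σ S i) := by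
  unfold isTop; infer_instance
/-- The collection `Ŝ` of candidate assortments. -/
def Shat {n M : ℕ} (Sm : Fin M → Finset (Fin (n + 1))) (r : Fin (n + 1) → ℝ)
    (S : Finset (Fin (n + 1))) : Prop :=
  0 ∈ S ∧ ∀ i' ∈ S, ∀ i : Fin (n + 1), r i' < r i →
    (∀ m : Fin M, i' ∈ Sm m → i ∈ Sm m) → i ∈ S

/-- Lemma 8 of the paper: with reverse revenue-ordered past assortments, `Ŝ` is the
collection of all subsets containing `0` and `n`. (The `m`-th past assortment, `m : Fin n`,
is the paper's assortment `S_{m+1} = {0, 1, …, m} ∪ {n}`.) -/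
theorem statement7 (n : ℕ) (hn : 1 ≤ n)
    (r : Fin (n + 1) → ℝ) (hr0 : r 0 = 0) (hr : StrictMono r)
    (Sm : Fin n → Finset (Fin (n + 1)))
    (hSm : ∀ m : Fin n, Sm m =
      Finset.univ.filter (fun i : Fin (n + 1) => (i : ℕ) ≤ (m : ℕ) ∨ i = Fin.last n)) :
    ∀ S : Finset (Fin (n + 1)), Shat Sm r S ↔ (0 ∈ S ∧ Fin.last n ∈ S) := by
  intro S
  constructor
  · rintro ⟨h0, h⟩
    refine ⟨h0, h 0 h0 (Fin.last n) (hr ?_) (fun m _ => ?_)⟩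
    · have : (0 : Fin (n+1)) ≠ Fin.last n := by
        intro heq
        have := congrArg (Fin.val) heq
        simp [Fin.last] at this
        omega
      exact lt_of_le_of_ne (Fin.zero_le _) this
    · rw [hSm m]; simp
  · rintro ⟨h0, hlast⟩
    refine ⟨h0, fun i' hi' i hri hmem => ?_⟩
    have hlt : i' < i := hr.lt_iff_lt.mp hri
    by_cases hi : i = Fin.last n
    · exact hi ▸ hlast
    · exfalso
      have hin : (i : ℕ) < n := by
        have := Fin.lt_last_iff_ne_last.mpr hi
        simpa [Fin.lt_def, Fin.last] using this
      have hi'n : (i' : ℕ) < n := lt_trans hlt hin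
      have := hmem ⟨(i' : ℕ), hi'n⟩
      rw [hSm] at this
      simp only [Finset.mem_filter, Finset.mem_univ, true_and] at this
      have := this (Or.inl (le_refl _))
      rcases this with h | h
      · exact absurd h (by omega)
      · exact hi h

end RobustAssortment
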